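/- Let μ be an isotropic measure on S^{n-1} and H ∈ G_{n,k}. Then the measure μ̄ on S^{n-1} ∩ H defined by μ̄(A) = ∫_{S^{n-1}∖H^⊥} 1_A(P_H u / ‖P_H u‖) ‖P_H u‖² dμ(u) is isotropic on the unit sphere of H; that is, ∫_{S^{n-1}∩H} ⟨y,w⟩² dμ̄(w) = ‖y‖² for all y ∈ H. Moreover μ̄(S^{n-1} ∩ H) = k. -/

import Mathlib

open MeasureTheory
open scoped RealInnerProductSpace

theorem stmt2 (n k : ℕ) (μ : Measure (EuclideanSpace ℝ (Fin n))) [IsFiniteMeasure μ]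
    (hsph : μ (Metric.sphere (0 : EuclideanSpace ℝ (Fin n)) 1)ᶜ = 0)
    (hiso : ∀ x : EuclideanSpace ℝ (Fin n), ∫ u, ⟪x, u⟫ ^ 2 ∂μ = ‖x‖ ^ 2)
    (H : Submodule ℝ (EuclideanSpace ℝ (Fin n))) (hH : Module.finrank ℝ H = k)
    (μbar : Measure H)
    (hμbar : μbar = Measure.map
      (fun u => (‖(Submodule.orthogonalProjectionOnto H u : EuclideanSpace ℝ (Fin n))‖)⁻¹ • Submodule.orthogonalProjectionOnto H u)
      ((μ.restrict {u | (Submodule.orthogonalProjectionOnto H u : EuclideanSpace ℝ (Fin n)) ≠ 0}).withDensity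
        (fun u => ENNReal.ofReal (‖(Submodule.orthogonalProjectionOnto H u : EuclideanSpace ℝ (Fin n))‖ ^ 2)))) :
    (∀ y : H, ∫ w, ⟪y, w⟫ ^ 2 ∂μbar = ‖y‖ ^ 2) ∧ μbar Set.univ = k := by
  set E := EuclideanSpace ℝ (Fin n)
  set S : Set E := {u | (Submodule.orthogonalProjectionOnto H u : E) ≠ 0} with hS
  have hPm : Measurable (fun u : E => (Submodule.orthogonalProjectionOnto H u : E)) :=
    (continuous_subtype_val.comp (Submodule.orthogonalProjectionOnto H).continuous).measurable
  have hfm : Measurable (fun u : E =>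
      (‖(Submodule.orthogonalProjectionOnto H u : E)‖)⁻¹ • Submodule.orthogonalProjectionOnto H u) :=
    (hPm.norm.inv).smul (Submodule.orthogonalProjectionOnto H).continuous.measurable
  have hSm : MeasurableSet S := by
    have : S = (fun u : E => (Submodule.orthogonalProjectionOnto H u : E)) ⁻¹' ({0}ᶜ) := rfl
    rw [this]
    exact hPm (measurableSet_singleton 0).compl
  have hdens : Measurable (fun u : E => ENNReal.ofReal (‖(Submodule.orthogonalProjectionOnto H u : E)‖ ^ 2)) :=
    (hPm.norm.pow_const 2).ennreal_ofReal
  have hcE : ∀ x : E, Continuous fun u : E => ⟪x, u⟫ ^ 2 :=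
    fun x => ((innerSL ℝ x).continuous).pow 2
  have hcH : ∀ y : H, Continuous fun w : H => ⟪y, w⟫ ^ 2 :=
    fun y => ((innerSL ℝ y).continuous).pow 2
  have haes : ∀ᵐ u ∂μ, ‖u‖ = 1 := by
    rw [ae_iff]
    refine measure_mono_null (fun u hu => ?_) hsph
    simpa [Metric.mem_sphere, dist_eq_norm] using hu
  have hInt : ∀ x : E, Integrable (fun u => ⟪x, u⟫ ^ 2) μ := by
    intro x
    refine (integrable_const (‖x‖ ^ 2)).mono' (hcE x).aestronglyMeasurable ?_
    filter_upwards [haes] with u hu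
    have h1 := abs_real_inner_le_norm x u
    rw [Real.norm_eq_abs, abs_pow]
    calc |⟪x, u⟫| ^ 2 ≤ (‖x‖ * ‖u‖) ^ 2 := pow_le_pow_left₀ (abs_nonneg _) h1 2
      _ = ‖x‖ ^ 2 := by rw [hu]; ring
  have hLInt : ∀ x : E, ∫⁻ u, ENNReal.ofReal (⟪x, u⟫ ^ 2) ∂μ = ENNReal.ofReal (‖x‖ ^ 2) := by
    intro x
    rw [← ofReal_integral_eq_lintegral_ofReal (hInt x) (ae_of_all _ fun u => sq_nonneg _),
      hiso x]
  constructor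
  · intro y
    have hgm : Measurable (fun w : H => ENNReal.ofReal (⟪y, w⟫ ^ 2)) :=
      (hcH y).measurable.ennreal_ofReal
    rw [integral_eq_lintegral_of_nonneg_ae (ae_of_all _ fun w => sq_nonneg _)
      (hcH y).aestronglyMeasurable, hμbar,
      lintegral_map hgm hfm,
      lintegral_withDensity_eq_lintegral_mul _ hdens
        (show Measurable fun u : E => ENNReal.ofReal
          (⟪y, (‖(Submodule.orthogonalProjectionOnto H u : E)‖)⁻¹ • Submodule.orthogonalProjectionOnto H u⟫ ^ 2)
          from hgm.comp hfm)]
    have hcongr : ∫⁻ u in S, (fun u : E => ENNReal.ofReal (‖(Submodule.orthogonalProjectionOnto H u : E)‖ ^ 2)) u *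
        ENNReal.ofReal (⟪y, (‖(Submodule.orthogonalProjectionOnto H u : E)‖)⁻¹ • Submodule.orthogonalProjectionOnto H u⟫ ^ 2) ∂μ
        = ∫⁻ u, ENNReal.ofReal (⟪(y : E), u⟫ ^ 2) ∂μ := by
      have h2 : ∫⁻ u in Sᶜ, ENNReal.ofReal (⟪(y : E), u⟫ ^ 2) ∂μ = 0 := by
        have hz : ∀ᵐ u ∂(μ.restrict Sᶜ), ENNReal.ofReal (⟪(y : E), u⟫ ^ 2) = 0 := by
          refine (ae_restrict_iff' hSm.compl).2 (ae_of_all _ fun u hu => ?_)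
          have hu0 : (Submodule.orthogonalProjectionOnto H u : E) = 0 := by
            simpa [hS] using hu
          have hiz : ⟪(y : E), u⟫ = 0 := by
            have h3 := Submodule.inner_orthogonalProjectionOnto_eq_of_mem_left (K := H) y u
            rw [← h3, Submodule.coe_inner]
            simp [hu0]
          simp [hiz]
        rw [lintegral_congr_ae hz, lintegral_zero]
      conv_rhs => rw [← lintegral_add_compl (fun u => ENNReal.ofReal (⟪(y : E), u⟫ ^ 2)) hSm]
      rw [h2, add_zero]
      refine setLIntegral_congr_fun hSm (fun u hu => ?_)
      have hu0 : (Submodule.orthogonalProjectionOnto H u : E) ≠ 0 := hu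
      have hn0 : ‖(Submodule.orthogonalProjectionOnto H u : E)‖ ≠ 0 := norm_ne_zero_iff.2 hu0
      have hin : ⟪y, (‖(Submodule.orthogonalProjectionOnto H u : E)‖)⁻¹ • Submodule.orthogonalProjectionOnto H u⟫
          = (‖(Submodule.orthogonalProjectionOnto H u : E)‖)⁻¹ * ⟪((y : H) : E), u⟫ := by
        exact (real_inner_smul_right y (Submodule.orthogonalProjectionOnto H u) _).trans
          (by rw [Submodule.inner_orthogonalProjectionOnto_eq_of_mem_left])
      simp only [hin]
      rw [← ENNReal.ofReal_mul (by positivity)]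
      congr 1
      field_simp
    simp only [Pi.mul_apply]
    rw [hcongr, hLInt]
    rw [ENNReal.toReal_ofReal (by positivity)]
    rfl
  · subst hH
    set b := stdOrthonormalBasis ℝ H with hb
    have hnorm : ∀ u : E, ‖(Submodule.orthogonalProjectionOnto H u : E)‖ ^ 2
        = ∑ i, ⟪((b i : H) : E), u⟫ ^ 2 := by
      intro u
      set v := Submodule.orthogonalProjectionOnto H u with hv
      have h := b.sum_inner_mul_inner v v
      have h2 : ⟪v, v⟫ = ‖v‖ ^ 2 := real_inner_self_eq_norm_sq v
      have h3 : ‖v‖ = ‖(v : E)‖ := rfl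
      rw [← h3, ← h2, ← h]
      refine Finset.sum_congr rfl fun i _ => ?_
      have he : ⟪b i, v⟫ = ⟪((b i : H) : E), u⟫ := by
        rw [hv]; exact Submodule.inner_orthogonalProjectionOnto_eq_of_mem_left (K := H) (b i) u
      calc ⟪v, b i⟫ * ⟪b i, v⟫ = ⟪b i, v⟫ * ⟪b i, v⟫ := by rw [real_inner_comm]
        _ = ⟪((b i : H) : E), u⟫ ^ 2 := by rw [he]; ring
    rw [hμbar, Measure.map_apply hfm MeasurableSet.univ, Set.preimage_univ,
      withDensity_apply _ MeasurableSet.univ, Measure.restrict_univ]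
    have hext : ∫⁻ u in S, ENNReal.ofReal (‖(Submodule.orthogonalProjectionOnto H u : E)‖ ^ 2) ∂μ
        = ∫⁻ u, ENNReal.ofReal (‖(Submodule.orthogonalProjectionOnto H u : E)‖ ^ 2) ∂μ := by
      have h2 : ∫⁻ u in Sᶜ, ENNReal.ofReal (‖(Submodule.orthogonalProjectionOnto H u : E)‖ ^ 2) ∂μ = 0 := by
        have hz : ∀ᵐ u ∂(μ.restrict Sᶜ),
            ENNReal.ofReal (‖(Submodule.orthogonalProjectionOnto H u : E)‖ ^ 2) = 0 := by
          refine (ae_restrict_iff' hSm.compl).2 (ae_of_all _ fun u hu => ?_)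
          have hu0 : (Submodule.orthogonalProjectionOnto H u : E) = 0 := by simpa [hS] using hu
          simp [hu0]
        rw [lintegral_congr_ae hz, lintegral_zero]
      conv_rhs => rw [← lintegral_add_compl
        (fun u => ENNReal.ofReal (‖(Submodule.orthogonalProjectionOnto H u : E)‖ ^ 2)) hSm]
      rw [h2, add_zero]
    rw [hext]
    have hpt : (fun u : E => ENNReal.ofReal (‖(Submodule.orthogonalProjectionOnto H u : E)‖ ^ 2))
        = fun u : E => ∑ i, ENNReal.ofReal (⟪((b i : H) : E), u⟫ ^ 2) := by
      funext u
      rw [hnorm u, ENNReal.ofReal_sum_of_nonneg (fun i _ => sq_nonneg _)]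
    rw [hpt, lintegral_finset_sum _ (fun i _ => (hcE _).measurable.ennreal_ofReal)]
    have hone : ∀ i, ∫⁻ u, ENNReal.ofReal (⟪((b i : H) : E), u⟫ ^ 2) ∂μ = 1 := by
      intro i
      rw [hLInt]
      have h1 : ‖((b i : H) : E)‖ = 1 := b.orthonormal.1 i
      rw [h1]
      simp
    exact (Finset.sum_congr rfl fun i _ => hone i).trans (by simp)
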